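/- arXiv:1604.02517 — 6 statements merged into one kernel-verified Lean document; each statement's English description precedes it below -/
import Mathlib

section
/- Let R_s : Fin N → ℝ≥0 be non-increasing and R_r : Fin N → ℝ≥0 be non-decreasing. If the total causality constraint holds, i.e., ∑_{i<N} R_r i ≤ ∑_{i<N} R_s i, then for every n ≤ N, the partial causality constraint ∑_{i<n} R_r i ≤ ∑_{i<n} R_s i also holds. -/
open scoped NNReal

/-- Lemma 4 abstraction: with `R_s` non-increasing and `R_r` non-decreasing, the total
causality constraint implies all partial causality constraints. -/
theorem stmt_5 (N : ℕ) (Rs Rr : Fin N → ℝ≥0) (hs : Antitone Rs) (hr : Monotone Rr)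
    (htot : ∑ i, Rr i ≤ ∑ i, Rs i) :
    ∀ n : ℕ, n ≤ N →
      ∑ i ∈ Finset.univ.filter (fun i : Fin N => (i : ℕ) < n), Rr i ≤
        ∑ i ∈ Finset.univ.filter (fun i : Fin N => (i : ℕ) < n), Rs i := by
  intro n hn
  by_contra h
  push_neg at h
  obtain ⟨i, hi, hlt⟩ := Finset.exists_lt_of_sum_lt h
  simp only [Finset.mem_filter, Finset.mem_univ, true_and] at hi
  -- On the tail (indices j with ¬ (j < n)), Rs j ≤ Rr j
  have htail : ∀ j ∈ Finset.univ.filter (fun j : Fin N => ¬ (j : ℕ) < n),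
      Rs j ≤ Rr j := by
    intro j hj
    simp only [Finset.mem_filter, Finset.mem_univ, true_and, not_lt] at hj
    have hij : i ≤ j := by
      have : (i : ℕ) ≤ (j : ℕ) := le_trans (Nat.le_of_lt hi) hj
      exact Fin.le_def.mpr this
    exact le_trans (le_trans (hs hij) hlt.le) (hr hij)
  have htailsum :
      ∑ j ∈ Finset.univ.filter (fun j : Fin N => ¬ (j : ℕ) < n), Rs j ≤
        ∑ j ∈ Finset.univ.filter (fun j : Fin N => ¬ (j : ℕ) < n), Rr j :=
    Finset.sum_le_sum htail
  have hsplitR : ∑ j, Rr j =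
      (∑ j ∈ Finset.univ.filter (fun j : Fin N => (j : ℕ) < n), Rr j) +
      (∑ j ∈ Finset.univ.filter (fun j : Fin N => ¬ (j : ℕ) < n), Rr j) :=
    (Finset.sum_filter_add_sum_filter_not _ _ _).symm
  have hsplitS : ∑ j, Rs j =
      (∑ j ∈ Finset.univ.filter (fun j : Fin N => (j : ℕ) < n), Rs j) +
      (∑ j ∈ Finset.univ.filter (fun j : Fin N => ¬ (j : ℕ) < n), Rs j) :=
    (Finset.sum_filter_add_sum_filter_not _ _ _).symm
  rw [hsplitR, hsplitS] at htot
  have := add_lt_add_of_lt_of_le h htailsum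
  exact absurd htot (not_le.mpr this)
end

section
/- The water-filling rate function is monotone: for fixed positive channel gains γ : Fin N → ℝ>0, the map E ↦ ∑_n [log₂(η(E) · γ n)]⁺ — where η(E) is chosen so that ∑_n [η(E) - 1/γ n]⁺ = E — is strictly increasing in E > 0. -/
/-- The classic water-filling rate is strictly increasing in the total power `E`. -/
theorem stmt_7 (N : ℕ) (hN : 0 < N) (γ : Fin N → ℝ) (hγ : ∀ n, 0 < γ n)
    (E₁ E₂ η₁ η₂ : ℝ) (hE₁ : 0 < E₁) (hE : E₁ < E₂)
    (hη₁ : ∑ n, max (η₁ - 1 / γ n) 0 = E₁)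
    (hη₂ : ∑ n, max (η₂ - 1 / γ n) 0 = E₂) :
    ∑ n, max (Real.logb 2 (η₁ * γ n)) 0 < ∑ n, max (Real.logb 2 (η₂ * γ n)) 0 := by
  -- find an index where the first water level is above the noise floor
  obtain ⟨n₀, -, hn₀⟩ : ∃ n ∈ Finset.univ, 0 < max (η₁ - 1 / γ n) 0 := by
    by_contra h
    push_neg at h
    have : ∑ n, max (η₁ - 1 / γ n) 0 ≤ 0 :=
      Finset.sum_nonpos fun n _ => h n (Finset.mem_univ n)
    linarith [hη₁ ▸ this]
  have hfloor : 1 / γ n₀ < η₁ := by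
    rcases lt_or_ge (1 / γ n₀) η₁ with h | h
    · exact h
    · rw [max_eq_right (by linarith : η₁ - 1 / γ n₀ ≤ 0)] at hn₀
      exact absurd hn₀ (lt_irrefl 0)
  have hη₁pos : 0 < η₁ := lt_trans (div_pos one_pos (hγ n₀)) hfloor
  have hη₁₂ : η₁ < η₂ := by
    by_contra h
    push_neg at h
    have : ∑ n, max (η₂ - 1 / γ n) 0 ≤ ∑ n, max (η₁ - 1 / γ n) 0 :=
      Finset.sum_le_sum fun n _ => max_le_max (by linarith) le_rfl
    linarith
  have hη₂pos : 0 < η₂ := lt_trans hη₁pos hη₁₂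
  apply Finset.sum_lt_sum (f := fun n => max (Real.logb 2 (η₁ * γ n)) 0)
  · intro n _
    refine max_le_max ?_ le_rfl
    exact Real.logb_le_logb_of_le one_lt_two (mul_pos hη₁pos (hγ n)) (by nlinarith [hγ n])
  · refine ⟨n₀, Finset.mem_univ n₀, ?_⟩
    have h1 : 1 < η₁ * γ n₀ := by
      rw [div_lt_iff₀ (hγ n₀)] at hfloor
      linarith
    have h2 : η₁ * γ n₀ < η₂ * γ n₀ := by nlinarith [hγ n₀]
    have hlt : Real.logb 2 (η₁ * γ n₀) < Real.logb 2 (η₂ * γ n₀) :=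
      Real.logb_lt_logb one_lt_two (by linarith) h2
    have hpos1 : 0 < Real.logb 2 (η₁ * γ n₀) := Real.logb_pos one_lt_two h1
    rw [max_eq_left hpos1.le]
    exact lt_of_lt_of_le hlt (le_max_left _ _)
end

section
/- For fixed positive channel gains γ : Fin N → ℝ>0 and total power E > 0, there exists a unique water level η > 0 such that ∑_n max(η - 1/γ n, 0) = E. -/
/-- Water-filling feasibility and uniqueness: there is a unique water level `η > 0` with
`∑ n max(η - 1/γ n, 0) = E`. -/
theorem stmt_8 (N : ℕ) (hN : 0 < N) (γ : Fin N → ℝ) (hγ : ∀ n, 0 < γ n)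
    (E : ℝ) (hE : 0 < E) :
    ∃! η : ℝ, 0 < η ∧ ∑ n, max (η - 1 / γ n) 0 = E := by
  haveI : Nonempty (Fin N) := ⟨⟨0, hN⟩⟩
  set f : ℝ → ℝ := fun η => ∑ n, max (η - 1 / γ n) 0 with hf
  have hcont : Continuous f := by
    apply continuous_finset_sum
    intro n _
    exact (continuous_id.sub continuous_const).max continuous_const
  -- strict monotonicity where value is positive
  have hmono : ∀ x y : ℝ, x < y → f x = E → f y ≠ E := by
    intro x y hxy hfx hfy
    have hex : ∃ n ∈ Finset.univ, (0:ℝ) < max (x - 1 / γ n) 0 := by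
      apply Finset.exists_lt_of_sum_lt (f := fun _ => (0:ℝ))
      rw [Finset.sum_const, smul_zero]
      show (0:ℝ) < f x
      rw [hfx]; exact hE
    obtain ⟨n0, -, hn0⟩ := hex
    have hx0 : 0 < x - 1 / γ n0 := by
      by_contra h
      push_neg at h
      rw [max_eq_right h] at hn0
      exact lt_irrefl _ hn0
    have hlt : f x < f y := by
      apply Finset.sum_lt_sum
      · intro i _
        exact max_le_max (by linarith) le_rfl
      · refine ⟨n0, Finset.mem_univ n0, ?_⟩
        rw [max_eq_left hx0.le, max_eq_left (by linarith)]
        linarith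
    rw [hfx, hfy] at hlt
    exact lt_irrefl _ hlt
  -- existence via IVT
  set a : ℝ := Finset.univ.inf' Finset.univ_nonempty (fun n => 1 / γ n) with ha
  have ha_le : ∀ n, a ≤ 1 / γ n := fun n => Finset.inf'_le _ (Finset.mem_univ n)
  have ha_pos : 0 < a := by
    rw [ha, Finset.lt_inf'_iff]
    intro n _
    exact one_div_pos.mpr (hγ n)
  obtain ⟨n0, _, hn0⟩ := Finset.exists_mem_eq_inf' (Finset.univ_nonempty) (fun n => 1 / γ n)
  have hfa : f a = 0 := by
    apply Finset.sum_eq_zero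
    intro n _
    exact max_eq_right (by linarith [ha_le n])
  set b : ℝ := a + E with hb
  have hfb : E ≤ f b := by
    have : max (b - 1 / γ n0) 0 = E := by
      rw [max_eq_left (by rw [hb, ← hn0]; linarith)]
      rw [hb, ← hn0]; ring
    calc E = max (b - 1 / γ n0) 0 := this.symm
      _ ≤ f b := Finset.single_le_sum (f := fun n => max (b - 1 / γ n) 0) (fun i _ => le_max_right _ _) (Finset.mem_univ n0)
  have hab : a ≤ b := by rw [hb]; linarith
  have hE_mem : E ∈ Set.Icc (f a) (f b) := ⟨by rw [hfa]; exact hE.le, hfb⟩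
  obtain ⟨η, hη_mem, hηE⟩ := intermediate_value_Icc hab hcont.continuousOn hE_mem
  refine ⟨η, ⟨lt_of_lt_of_le ha_pos hη_mem.1, hηE⟩, ?_⟩
  intro y hy
  rcases lt_trichotomy y η with h | h | h
  · exact absurd hηE (hmono y η h hy.2)
  · exact h
  · exact absurd hy.2 (hmono η y h hηE)
end

section
/- The optimal value of the weighted sum-rate maximization max ∑_n β n · log₂(1 + p n · γ n) subject to ∑_n p n ≤ E, p n ≥ 0, with weights β n ≥ 0 and gains γ n > 0, is attained at p n = max(η β n - 1/γ n, 0) for a suitable η ≥ 0 satisfying ∑_n max(η β n - 1/γ n, 0) = E, whenever some β n > 0. -/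
/-- Weighted water-filling is optimal for the weighted sum-rate maximization problem. -/
theorem stmt_9 (N : ℕ) (β γ : Fin N → ℝ) (hβ : ∀ n, 0 ≤ β n) (hβpos : ∃ n, 0 < β n)
    (hγ : ∀ n, 0 < γ n) (E : ℝ) (hE : 0 < E) :
    ∃ η : ℝ, 0 ≤ η ∧ ∑ n, max (η * β n - 1 / γ n) 0 = E ∧
      ∀ q : Fin N → ℝ, (∀ n, 0 ≤ q n) → ∑ n, q n ≤ E →
        ∑ n, β n * Real.logb 2 (1 + q n * γ n) ≤
          ∑ n, β n * Real.logb 2 (1 + max (η * β n - 1 / γ n) 0 * γ n) := by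
  classical
  obtain ⟨n0, hn0⟩ := hβpos
  set f : ℝ → ℝ := fun η => ∑ n, max (η * β n - 1 / γ n) 0 with hf
  have hcont : Continuous f := by
    apply continuous_finset_sum
    intro n _
    exact ((continuous_id.mul continuous_const).sub continuous_const).max continuous_const
  have hf0 : f 0 = 0 := by
    simp only [hf]
    apply Finset.sum_eq_zero
    intro n _
    have hgn := hγ n
    have h1 : 0 < 1 / γ n := by positivity
    have h2 : (0:ℝ) * β n - 1 / γ n ≤ 0 := by linarith
    exact max_eq_right h2
  set M : ℝ := (E + 1 / γ n0) / β n0 with hM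
  have hMpos : 0 < M := by
    have hg := hγ n0
    have h1 : 0 < 1 / γ n0 := by positivity
    exact div_pos (by linarith) hn0
  have hfM : E ≤ f M := by
    have hterm : M * β n0 - 1 / γ n0 = E := by
      rw [hM]
      field_simp
      ring
    have h1 : E ≤ max (M * β n0 - 1 / γ n0) 0 := by
      rw [hterm]; exact le_max_left _ _
    calc E ≤ max (M * β n0 - 1 / γ n0) 0 := h1
      _ ≤ f M := by
        show _ ≤ ∑ n, max (M * β n - 1 / γ n) 0
        exact Finset.single_le_sum (f := fun n => max (M * β n - 1 / γ n) 0)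
          (fun n _ => le_max_right _ 0) (Finset.mem_univ n0)
  have hIVT := intermediate_value_Icc (le_of_lt hMpos) hcont.continuousOn
  have hEmem : E ∈ Set.Icc (f 0) (f M) := ⟨by rw [hf0]; exact hE.le, hfM⟩
  obtain ⟨η, hηmem, hηE⟩ := hIVT hEmem
  have hη0 : 0 ≤ η := hηmem.1
  have hηpos : 0 < η := by
    rcases hη0.lt_or_eq with h | h
    · exact h
    · exfalso; rw [← h] at hηE; rw [hf0] at hηE; linarith
  set p : Fin N → ℝ := fun n => max (η * β n - 1 / γ n) 0 with hp
  have hppos : ∀ n, 0 ≤ p n := fun n => le_max_right _ _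
  have hpsum : ∑ n, p n = E := hηE
  refine ⟨η, hη0, hηE, ?_⟩
  intro q hq hqE
  -- key pointwise inequality
  have key : ∀ n, β n * Real.log (1 + q n * γ n) ≤
      β n * Real.log (1 + p n * γ n) + (q n - p n) / η := by
    intro n
    have hγn := hγ n
    have hβn := hβ n
    have hBpos : 0 < 1 + q n * γ n := by
      have := mul_nonneg (hq n) hγn.le; linarith
    by_cases hc : η * β n - 1 / γ n ≤ 0
    · have hpn : p n = 0 := max_eq_right hc
      rw [hpn]
      simp only [zero_mul, add_zero, Real.log_one, mul_zero, sub_zero]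
      have hlog : Real.log (1 + q n * γ n) ≤ q n * γ n := by
        have := Real.log_le_sub_one_of_pos hBpos
        linarith
      have h1 : β n * Real.log (1 + q n * γ n) ≤ β n * (q n * γ n) :=
        mul_le_mul_of_nonneg_left hlog hβn
      have h2 : β n * (q n * γ n) ≤ q n / η := by
        have hbg : β n * γ n ≤ 1 / η := by
          have h3 : η * β n ≤ 1 / γ n := by linarith
          have h4 : η * β n * γ n ≤ 1 := by
            calc η * β n * γ n ≤ (1 / γ n) * γ n :=
              mul_le_mul_of_nonneg_right h3 hγn.le
            _ = 1 := by field_simp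
          rw [le_div_iff₀ hηpos]
          nlinarith
        calc β n * (q n * γ n) = (β n * γ n) * q n := by ring
          _ ≤ (1 / η) * q n := mul_le_mul_of_nonneg_right hbg (hq n)
          _ = q n / η := by ring
      linarith
    · push_neg at hc
      have hpn : p n = η * β n - 1 / γ n := max_eq_left hc.le
      have hβnpos : 0 < β n := by
        rcases hβn.lt_or_eq with h | h
        · exact h
        · exfalso; rw [← h] at hc; simp at hc
          have : 0 < 1 / γ n := by positivity
          linarith
      have hA : 1 + p n * γ n = η * β n * γ n := by
        rw [hpn]; field_simp
        ring
      have hApos : 0 < 1 + p n * γ n := by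
        rw [hA]; positivity
      have hlog : Real.log (1 + q n * γ n) - Real.log (1 + p n * γ n) ≤
          ((1 + q n * γ n) - (1 + p n * γ n)) / (1 + p n * γ n) := by
        have hdiv : 0 < (1 + q n * γ n) / (1 + p n * γ n) := by positivity
        have h1 := Real.log_le_sub_one_of_pos hdiv
        rw [Real.log_div hBpos.ne' hApos.ne'] at h1
        have : (1 + q n * γ n) / (1 + p n * γ n) - 1
            = ((1 + q n * γ n) - (1 + p n * γ n)) / (1 + p n * γ n) := by
          rw [sub_div, div_self hApos.ne']
        linarith [this ▸ h1]
      have heq : β n * (((1 + q n * γ n) - (1 + p n * γ n)) / (1 + p n * γ n))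
          = (q n - p n) / η := by
        rw [hpn]
        field_simp
        ring
      nlinarith [mul_le_mul_of_nonneg_left hlog hβn]
  have hmain : ∑ n, β n * Real.log (1 + q n * γ n) ≤
      ∑ n, β n * Real.log (1 + p n * γ n) := by
    have h1 : ∑ n, β n * Real.log (1 + q n * γ n) ≤
        ∑ n, (β n * Real.log (1 + p n * γ n) + (q n - p n) / η) :=
      Finset.sum_le_sum fun n _ => key n
    rw [Finset.sum_add_distrib] at h1
    have h2 : ∑ n, (q n - p n) / η ≤ 0 := by
      rw [← Finset.sum_div]
      apply div_nonpos_of_nonpos_of_nonneg _ hηpos.le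
      rw [Finset.sum_sub_distrib, hpsum]
      linarith
    linarith
  simp only [Real.logb]
  calc ∑ n, β n * (Real.log (1 + q n * γ n) / Real.log 2)
      = (∑ n, β n * Real.log (1 + q n * γ n)) / Real.log 2 := by
        rw [Finset.sum_div]; exact Finset.sum_congr rfl fun n _ => by ring
    _ ≤ (∑ n, β n * Real.log (1 + p n * γ n)) / Real.log 2 := by
        gcongr <;> first | exact hmain | exact Real.log_pos one_lt_two
    _ = ∑ n, β n * (Real.log (1 + p n * γ n) / Real.log 2) := by
        rw [Finset.sum_div]; exact Finset.sum_congr rfl fun n _ => by ring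
end

section
/- Reordering optimality (Theorem 2 core): let g : Fin N → ℝ be any sequence of relay x-positions with values in [0, D] and with |g(n+1) - g(n)| ≤ V for all n; let g̃ be the non-decreasing rearrangement of g. Then g̃ also satisfies |g̃(n+1) - g̃(n)| ≤ V for all n. -/
/-- Sorting a sequence in non-decreasing order preserves the per-step speed constraint. -/
theorem stmt_11 (N : ℕ) (D V : ℝ) (g g' : Fin N → ℝ)
    (hD : ∀ n, g n ∈ Set.Icc 0 D)
    (hspeed : ∀ i : ℕ, (h : i + 1 < N) → |g ⟨i + 1, h⟩ - g ⟨i, by omega⟩| ≤ V)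
    (σ : Equiv.Perm (Fin N)) (hperm : g' = g ∘ σ) (hmono : Monotone g') :
    ∀ i : ℕ, (h : i + 1 < N) → |g' ⟨i + 1, h⟩ - g' ⟨i, by omega⟩| ≤ V := by
  intro i h
  have hN : 0 < N := by omega
  have hV : 0 ≤ V := le_trans (abs_nonneg _) (hspeed 0 (by omega))
  have hle : g' ⟨i, by omega⟩ ≤ g' ⟨i + 1, h⟩ := hmono (by simp [Fin.le_def])
  set a := g' ⟨i, by omega⟩ with ha
  set b := g' ⟨i + 1, h⟩ with hb
  rw [abs_of_nonneg (by linarith)]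
  by_contra hc
  push_neg at hc
  have hdich : ∀ n : Fin N, g n ≤ a ∨ b ≤ g n := by
    intro n
    have hgn : g n = g' (σ.symm n) := by simp [hperm]
    rcases le_or_gt (σ.symm n) (⟨i, by omega⟩ : Fin N) with hle' | hlt
    · left; rw [hgn]; exact hmono hle'
    · right; rw [hgn]
      exact hmono (show (⟨i + 1, h⟩ : Fin N) ≤ σ.symm n from hlt)
  have key : ∀ k, (hk : k < N) → (g ⟨k, hk⟩ ≤ a ↔ g ⟨0, hN⟩ ≤ a) := by
    intro k
    induction k with
    | zero => intro hk; exact Iff.rfl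
    | succ k ih =>
      intro hk
      have hk' : k < N := by omega
      have hs := abs_le.mp (hspeed k hk)
      have step : g ⟨k + 1, hk⟩ ≤ a ↔ g ⟨k, hk'⟩ ≤ a := by
        constructor
        · intro h1
          rcases hdich ⟨k, hk'⟩ with h2 | h2
          · exact h2
          · exfalso; linarith [hs.1]
        · intro h1
          rcases hdich ⟨k + 1, hk⟩ with h2 | h2
          · exact h2
          · exfalso; linarith [hs.2]
      rw [step, ih hk']
  have h1 : g (σ ⟨i, by omega⟩) ≤ a := by rw [ha, hperm]; simp
  have h2 : b ≤ g (σ ⟨i + 1, h⟩) := by rw [hb, hperm]; simp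
  have k1 := key (σ ⟨i, by omega⟩).val (σ ⟨i, by omega⟩).isLt
  have k2 := key (σ ⟨i + 1, h⟩).val (σ ⟨i + 1, h⟩).isLt
  rw [Fin.eta] at k1 k2
  have hnot : ¬ g (σ ⟨i + 1, h⟩) ≤ a := by intro hcon; linarith
  exact hnot (k2.mpr (k1.mp h1))
end

section
/- SCA lower bound for channel capacity: for d > 0, γ ≥ 0, x, y ∈ ℝ with d² = H² + x² + y² (H > 0), and any increments δ, ξ ∈ ℝ, log₂(1 + γ/(H² + (x+δ)² + (y+ξ)²)) ≥ log₂(1 + γ/d²) - a(δ² + ξ²) - bδ - cξ, where a = γ log₂e/(d²(γ+d²)), b = 2xa, c = 2ya. -/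
lemma stmt_15_aux (s u γ : ℝ) (hs : 0 < s) (hγ : 0 ≤ γ) (hB : 0 < s + u) :
    Real.log (1 + γ / s) - Real.log (1 + γ / (s + u)) ≤ γ * u / (s * (γ + s)) := by
  have hA : 0 < γ + s := by linarith
  have hC : 0 < γ + (s + u) := by linarith
  have hX : 0 < 1 + γ / (s + u) := by positivity
  have hY : 0 < 1 + γ / s := by positivity
  rw [← Real.log_div (ne_of_gt hY) (ne_of_gt hX)]
  refine le_trans (Real.log_le_sub_one_of_pos (by positivity)) ?_
  have h1 : (1 + γ / s) / (1 + γ / (s + u)) - 1 = γ * u / (s * (γ + (s + u))) := by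
    field_simp
    ring
  rw [h1, div_le_div_iff₀ (by positivity) (by positivity)]
  nlinarith [mul_nonneg (mul_nonneg hγ (sq_nonneg u)) hs.le]

/-- Lemma 2 (SCA lower bound): global concave-quadratic lower bound on the link rate after a
horizontal displacement `(δ, ξ)` of the relay. -/
theorem stmt_15 (H x y δ ξ γ d : ℝ) (hH : 0 < H) (hγ : 0 ≤ γ)
    (hd0 : 0 < d) (hd : d ^ 2 = H ^ 2 + x ^ 2 + y ^ 2) :
    Real.logb 2 (1 + γ / (H ^ 2 + (x + δ) ^ 2 + (y + ξ) ^ 2)) ≥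
      Real.logb 2 (1 + γ / d ^ 2)
        - (γ * Real.logb 2 (Real.exp 1) / (d ^ 2 * (γ + d ^ 2))) * (δ ^ 2 + ξ ^ 2)
        - (2 * x * (γ * Real.logb 2 (Real.exp 1) / (d ^ 2 * (γ + d ^ 2)))) * δ
        - (2 * y * (γ * Real.logb 2 (Real.exp 1) / (d ^ 2 * (γ + d ^ 2)))) * ξ := by
  have hlog2 : 0 < Real.log 2 := Real.log_pos (by norm_num)
  have hlogbe : Real.logb 2 (Real.exp 1) = 1 / Real.log 2 := by
    simp [Real.logb, Real.log_exp]
  have hs : 0 < d ^ 2 := by positivity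
  have hA : 0 < γ + d ^ 2 := by linarith
  set u : ℝ := δ ^ 2 + ξ ^ 2 + 2 * x * δ + 2 * y * ξ with hu
  have hDu : H ^ 2 + (x + δ) ^ 2 + (y + ξ) ^ 2 = d ^ 2 + u := by rw [hd, hu]; ring
  have hB : 0 < d ^ 2 + u := by rw [← hDu]; positivity
  have key := stmt_15_aux (d ^ 2) u γ hs hγ hB
  have main : Real.log (1 + γ / d ^ 2) - γ * u / (d ^ 2 * (γ + d ^ 2))
      ≤ Real.log (1 + γ / (d ^ 2 + u)) := by linarith
  rw [ge_iff_le, hDu]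
  have hrhs : Real.logb 2 (1 + γ / d ^ 2)
        - (γ * Real.logb 2 (Real.exp 1) / (d ^ 2 * (γ + d ^ 2))) * (δ ^ 2 + ξ ^ 2)
        - (2 * x * (γ * Real.logb 2 (Real.exp 1) / (d ^ 2 * (γ + d ^ 2)))) * δ
        - (2 * y * (γ * Real.logb 2 (Real.exp 1) / (d ^ 2 * (γ + d ^ 2)))) * ξ
      = (Real.log (1 + γ / d ^ 2) - γ * u / (d ^ 2 * (γ + d ^ 2))) / Real.log 2 := by
    rw [hlogbe, Real.logb, hu]
    field_simp
    ring
  rw [hrhs, Real.logb]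
  exact div_le_div_of_nonneg_right main hlog2.le
end
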